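/- The set M̃ = ⋃_{N∈ℕ} M_N ∪ M_∞ (the natural reversible extension of (M, Δ, α) associated with a closed set Y ⊇ M \ α(Δ)) is a closed, hence compact, subset of the product space ∏_ℕ (M ⊔ {0}), and the projection Φ(x₀, x₁, …) = x₀ is a continuous surjection from M̃ onto M satisfying Φ(α̃(x)) = α(Φ(x)) for x in the domain of α̃. -/

import Mathlib

/-- with `M̃ ⊆ (M ⊕ Unit)^ℕ` the natural reversible extension of `(M, Δ, α)`
associated with a closed set `Y ⊇ M \ α(Δ)` (encoded as in Statement 12), `M̃` is a closed
subset of the product space (hence compact), and the zeroth-coordinate projection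
`Φ(x₀,x₁,…) = x₀` is a continuous surjection `M̃ → M` satisfying `Φ(α̃ x) = α(Φ x)` whenever
`x` is in the domain of `α̃` (i.e. whenever the shift `α̃ x` exists in `M̃`). -/
theorem stmt13 {M : Type*} [TopologicalSpace M] [CompactSpace M] [T2Space M]
    (Δ : Set M) (hΔ : IsClopen Δ) (α : M → M) (hα : ContinuousOn α Δ)
    (Y : Set M) (hY : IsClosed Y) (hYc : Set.univ \ (α '' Δ) ⊆ Y)
    (Mt : Set (ℕ → M ⊕ Unit))
    (hMt : Mt = {x | (∀ n y, x (n + 1) = Sum.inl y → y ∈ Δ ∧ x n = Sum.inl (α y)) ∧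
                     (∀ n, x n = Sum.inr () → x (n + 1) = Sum.inr ()) ∧
                     (x 0 ≠ Sum.inr ()) ∧
                     (∀ n y, x n = Sum.inl y → x (n + 1) = Sum.inr () → y ∈ Y)}) :
    IsClosed Mt ∧
    ∃ Φ : C({x : ℕ → M ⊕ Unit // x ∈ Mt}, M),
      Function.Surjective Φ ∧
      (∀ (x : {x : ℕ → M ⊕ Unit // x ∈ Mt}) (y : M),
          (x : ℕ → M ⊕ Unit) 0 = Sum.inl y → Φ x = y) ∧
      (∀ x x' : {x : ℕ → M ⊕ Unit // x ∈ Mt},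
          (∀ n, (x' : ℕ → M ⊕ Unit) (n + 1) = (x : ℕ → M ⊕ Unit) n) →
          Φ x' = α (Φ x)) := by
  classical
  subst hMt
  have hp : ∀ n : ℕ, Continuous (fun x : ℕ → M ⊕ Unit => (x n, x (n + 1))) :=
    fun n => (continuous_apply n).prodMk (continuous_apply (n + 1))
  -- closedness
  have h1 : IsClosed {x : ℕ → M ⊕ Unit |
      ∀ n y, x (n + 1) = Sum.inl y → y ∈ Δ ∧ x n = Sum.inl (α y)} := by
    have hK1 : IsClosed {p : (M ⊕ Unit) × (M ⊕ Unit) |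
        ∀ y, p.2 = Sum.inl y → y ∈ Δ ∧ p.1 = Sum.inl (α y)} := by
      have heq : {p : (M ⊕ Unit) × (M ⊕ Unit) |
          ∀ y, p.2 = Sum.inl y → y ∈ Δ ∧ p.1 = Sum.inl (α y)} =
          (Set.univ ×ˢ Set.range (Sum.inr : Unit → M ⊕ Unit)) ∪
          ((fun y : M => ((Sum.inl (α y) : M ⊕ Unit), (Sum.inl y : M ⊕ Unit))) '' Δ) := by
        ext ⟨a, b⟩
        simp only [Set.mem_setOf_eq, Set.mem_union, Set.mem_prod, Set.mem_univ, true_and,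
          Set.mem_range, Set.mem_image]
        constructor
        · intro h
          cases b with
          | inl y =>
            right
            exact ⟨y, (h y rfl).1, by rw [(h y rfl).2]⟩
          | inr u => exact Or.inl ⟨u, rfl⟩
        · rintro (⟨u, hu⟩ | ⟨y, hy, heq⟩) y' h'
          · rw [← hu] at h'; exact absurd h' (by simp)
          · obtain ⟨ha, hb⟩ := Prod.mk.injEq .. ▸ heq
            rw [← hb] at h'
            obtain rfl : y = y' := Sum.inl.inj h'
            exact ⟨hy, ha.symm⟩
      rw [heq]
      refine (isClosed_univ.prod isClosed_range_inr).union ?_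
      refine (hΔ.isClosed.isCompact.image_of_continuousOn ?_).isClosed
      exact (continuous_inl.comp_continuousOn hα).prodMk continuous_inl.continuousOn
    have : {x : ℕ → M ⊕ Unit | ∀ n y, x (n + 1) = Sum.inl y → y ∈ Δ ∧ x n = Sum.inl (α y)} =
        ⋂ n, (fun x : ℕ → M ⊕ Unit => (x n, x (n + 1))) ⁻¹'
          {p : (M ⊕ Unit) × (M ⊕ Unit) | ∀ y, p.2 = Sum.inl y → y ∈ Δ ∧ p.1 = Sum.inl (α y)} := by
      ext x; simp only [Set.mem_setOf_eq, Set.mem_iInter, Set.mem_preimage]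
    rw [this]
    exact isClosed_iInter fun n => hK1.preimage (hp n)
  have h2 : IsClosed {x : ℕ → M ⊕ Unit |
      ∀ n, x n = Sum.inr () → x (n + 1) = Sum.inr ()} := by
    have hK2 : IsClosed {p : (M ⊕ Unit) × (M ⊕ Unit) | p.1 = Sum.inr () → p.2 = Sum.inr ()} := by
      rw [← isOpen_compl_iff]
      have : {p : (M ⊕ Unit) × (M ⊕ Unit) | p.1 = Sum.inr () → p.2 = Sum.inr ()}ᶜ =
          Set.range (Sum.inr : Unit → M ⊕ Unit) ×ˢ Set.range (Sum.inl : M → M ⊕ Unit) := by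
        ext ⟨a, b⟩
        simp only [Set.mem_compl_iff, Set.mem_setOf_eq, Classical.not_imp, Set.mem_prod,
          Set.mem_range]
        constructor
        · rintro ⟨ha, hb⟩
          refine ⟨⟨(), ha.symm⟩, ?_⟩
          cases b with
          | inl z => exact ⟨z, rfl⟩
          | inr u => cases u; exact absurd rfl hb
        · rintro ⟨⟨u, hu⟩, ⟨z, hz⟩⟩
          cases u
          exact ⟨hu.symm, by rw [← hz]; simp⟩
      rw [this]
      exact isOpen_range_inr.prod isOpen_range_inl
    have : {x : ℕ → M ⊕ Unit | ∀ n, x n = Sum.inr () → x (n + 1) = Sum.inr ()} =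
        ⋂ n, (fun x : ℕ → M ⊕ Unit => (x n, x (n + 1))) ⁻¹'
          {p : (M ⊕ Unit) × (M ⊕ Unit) | p.1 = Sum.inr () → p.2 = Sum.inr ()} := by
      ext x; simp only [Set.mem_setOf_eq, Set.mem_iInter, Set.mem_preimage]
    rw [this]
    exact isClosed_iInter fun n => hK2.preimage (hp n)
  have h3 : IsClosed {x : ℕ → M ⊕ Unit | x 0 ≠ Sum.inr ()} := by
    have : {x : ℕ → M ⊕ Unit | x 0 ≠ Sum.inr ()} =
        (fun x : ℕ → M ⊕ Unit => x 0) ⁻¹' Set.range (Sum.inl : M → M ⊕ Unit) := by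
      ext x
      simp only [Set.mem_setOf_eq, Set.mem_preimage, Set.mem_range]
      cases h : x 0 with
      | inl z => simp
      | inr u => cases u; simp
    rw [this]
    exact isClosed_range_inl.preimage (continuous_apply 0)
  have h4 : IsClosed {x : ℕ → M ⊕ Unit |
      ∀ n y, x n = Sum.inl y → x (n + 1) = Sum.inr () → y ∈ Y} := by
    have hK4 : IsClosed {p : (M ⊕ Unit) × (M ⊕ Unit) |
        ∀ y, p.1 = Sum.inl y → p.2 = Sum.inr () → y ∈ Y} := by
      rw [← isOpen_compl_iff]
      have : {p : (M ⊕ Unit) × (M ⊕ Unit) |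
          ∀ y, p.1 = Sum.inl y → p.2 = Sum.inr () → y ∈ Y}ᶜ =
          ((Sum.inl : M → M ⊕ Unit) '' Yᶜ) ×ˢ Set.range (Sum.inr : Unit → M ⊕ Unit) := by
        ext ⟨a, b⟩
        simp only [Set.mem_compl_iff, Set.mem_setOf_eq, not_forall, Classical.not_imp,
          Set.mem_prod, Set.mem_image, Set.mem_range]
        constructor
        · rintro ⟨y, ha, hb, hy⟩
          exact ⟨⟨y, hy, ha.symm⟩, ⟨(), hb.symm⟩⟩
        · rintro ⟨⟨y, hy, ha⟩, ⟨u, hb⟩⟩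
          cases u
          exact ⟨y, ha.symm, hb.symm, hy⟩
      rw [this]
      exact ((Topology.IsOpenEmbedding.inl.isOpenMap) _ hY.isOpen_compl).prod isOpen_range_inr
    have : {x : ℕ → M ⊕ Unit | ∀ n y, x n = Sum.inl y → x (n + 1) = Sum.inr () → y ∈ Y} =
        ⋂ n, (fun x : ℕ → M ⊕ Unit => (x n, x (n + 1))) ⁻¹'
          {p : (M ⊕ Unit) × (M ⊕ Unit) | ∀ y, p.1 = Sum.inl y → p.2 = Sum.inr () → y ∈ Y} := by
      ext x; simp only [Set.mem_setOf_eq, Set.mem_iInter, Set.mem_preimage]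
    rw [this]
    exact isClosed_iInter fun n => hK4.preimage (hp n)
  refine ⟨h1.inter (h2.inter (h3.inter h4)), ?_⟩
  -- the projection Φ
  set S : Set (ℕ → M ⊕ Unit) :=
    {x | (∀ n y, x (n + 1) = Sum.inl y → y ∈ Δ ∧ x n = Sum.inl (α y)) ∧
         (∀ n, x n = Sum.inr () → x (n + 1) = Sum.inr ()) ∧
         (x 0 ≠ Sum.inr ()) ∧
         (∀ n y, x n = Sum.inl y → x (n + 1) = Sum.inr () → y ∈ Y)} with hS
  have hne : ∀ x : {x : ℕ → M ⊕ Unit // x ∈ S}, ((x : ℕ → M ⊕ Unit) 0).isLeft := by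
    rintro ⟨x, hx⟩
    show (x 0).isLeft = true
    cases h : x 0 with
    | inl z => rfl
    | inr u => cases u; exact absurd h hx.2.2.1
  let Φf : {x : ℕ → M ⊕ Unit // x ∈ S} → M := fun x => ((x : ℕ → M ⊕ Unit) 0).getLeft (hne x)
  have hΦ0 : ∀ x : {x : ℕ → M ⊕ Unit // x ∈ S},
      Sum.inl (Φf x) = (x : ℕ → M ⊕ Unit) 0 := fun x => Sum.inl_getLeft _ _
  have hcont : Continuous Φf := by
    refine ((Topology.IsEmbedding.inl :
      Topology.IsEmbedding (Sum.inl : M → M ⊕ Unit)).continuous_iff).mpr ?_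
    have : (Sum.inl ∘ Φf) = fun x : {x : ℕ → M ⊕ Unit // x ∈ S} => (x : ℕ → M ⊕ Unit) 0 :=
      funext hΦ0
    rw [this]
    exact (continuous_apply 0).comp continuous_subtype_val
  refine ⟨⟨Φf, hcont⟩, ?_, ?_, ?_⟩
  · -- surjectivity
    have hcase : ∀ s : M ⊕ Unit, (∃ z, s = Sum.inl z) ∨ s = Sum.inr () := by
      rintro (z | u)
      · exact Or.inl ⟨z, rfl⟩
      · cases u; exact Or.inr rfl
    intro y
    set step : M ⊕ Unit → M ⊕ Unit :=
      Sum.elim (fun z => if h : ∃ w ∈ Δ, α w = z then Sum.inl h.choose else Sum.inr ())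
        (fun _ => Sum.inr ()) with hstep
    set x : ℕ → M ⊕ Unit := fun n => step^[n] (Sum.inl y) with hxdef
    have hx0 : x 0 = Sum.inl y := rfl
    have hxs : ∀ n, x (n + 1) = step (x n) := fun n => Function.iterate_succ_apply' step n _
    have hmem : x ∈ S := by
      refine ⟨?_, ?_, ?_, ?_⟩
      · intro n w hw
        rw [hxs] at hw
        rcases hcase (x n) with ⟨z, hz⟩ | hz
        · rw [hz, hstep, Sum.elim_inl] at hw
          by_cases h : ∃ w ∈ Δ, α w = z
          · rw [dif_pos h] at hw
            obtain rfl : h.choose = w := Sum.inl.inj hw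
            exact ⟨h.choose_spec.1, by rw [hz, h.choose_spec.2]⟩
          · rw [dif_neg h] at hw
            exact absurd hw (by simp)
        · rw [hz, hstep] at hw
          exact absurd hw (by simp)
      · intro n h
        rw [hxs, h, hstep]
        rfl
      · rw [hx0]; simp
      · intro n z hz hnext
        rw [hxs, hz, hstep, Sum.elim_inl] at hnext
        by_cases h : ∃ w ∈ Δ, α w = z
        · rw [dif_pos h] at hnext
          exact absurd hnext (by simp)
        · refine hYc ⟨Set.mem_univ z, fun hc => h ?_⟩
          obtain ⟨w, hw, hww⟩ := hc
          exact ⟨w, hw, hww⟩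
    refine ⟨⟨x, hmem⟩, ?_⟩
    have h0 : Sum.inl (Φf ⟨x, hmem⟩) = Sum.inl y := (hΦ0 ⟨x, hmem⟩).trans hx0
    show Φf ⟨x, hmem⟩ = y
    exact Sum.inl.inj h0
  · -- value of Φ
    intro x y hxy
    have h0 : Sum.inl (Φf x) = Sum.inl y := (hΦ0 x).trans hxy
    show Φf x = y
    exact Sum.inl.inj h0
  · -- intertwining
    intro x x' hsh
    have h1' : (x' : ℕ → M ⊕ Unit) (0 + 1) = Sum.inl (Φf x) := by
      rw [hsh 0]; exact (hΦ0 x).symm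
    obtain ⟨_, hx'0⟩ := x'.2.1 0 (Φf x) h1'
    have h0 : Sum.inl (Φf x') = Sum.inl (α (Φf x)) := (hΦ0 x').trans hx'0
    show Φf x' = α (Φf x)
    exact Sum.inl.inj h0
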